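/- Let G be a first order reaction graph embedded in ℕ₀^d (with no redundant species) that is A-endotactic for A = {±Σ_{i∈I} e_i : ∅ ≠ I ⊆ [d]}. Let G⁰ be the weakly connected component of G containing the zero complex (empty if 0 ∉ V) and G• = G \ G⁰. Then G⁰ and G• have disjoint sets of species, G• is weakly reversible, monomolecular (all vertices of ℓ₁-norm 1) with deficiency zero, and if G⁰ ≠ ∅ then G⁰ is strongly endotactic; consequently G is endotactic. -/

import Mathlib

open Matrix Finset
open scoped Matrix Classical

abbrev Vec (d : ℕ) := Fin d → ℝ
abbrev Edge (d : ℕ) := Vec d × Vec d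

/-- Sources of edges whose reaction vector is not orthogonal to `u`. -/
def srcU {d : ℕ} (E : Finset (Edge d)) (u : Vec d) : Set (Vec d) :=
  {y | ∃ y', (y, y') ∈ E ∧ (y' - y) ⬝ᵥ u ≠ 0}

/-- `G` is `u`-endotactic: no `u`-endotacticity violating reaction. -/
def uEndotactic {d : ℕ} (E : Finset (Edge d)) (u : Vec d) : Prop :=
  ¬ ∃ y y', (y, y') ∈ E ∧ 0 < (y' - y) ⬝ᵥ u ∧ ∀ z ∈ srcU E u, z ⬝ᵥ u ≤ y ⬝ᵥ u

def Endotactic {d : ℕ} (E : Finset (Edge d)) : Prop := ∀ u : Vec d, uEndotactic E u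

/-- Reachability by a directed path. -/
def Reach {d : ℕ} (E : Finset (Edge d)) : Vec d → Vec d → Prop :=
  Relation.ReflTransGen (fun a b => (a, b) ∈ E)

def IsEig {d : ℕ} (A : Matrix (Fin d) (Fin d) ℝ) (μ : ℂ) : Prop :=
  ∃ v : Fin d → ℂ, v ≠ 0 ∧ (A.map Complex.ofReal).mulVec v = μ • v

def InV {d : ℕ} (E : Finset (Edge d)) (y : Vec d) : Prop :=
  ∃ e ∈ E, e.1 = y ∨ e.2 = y

def IsSource {d : ℕ} (E : Finset (Edge d)) (y : Vec d) : Prop :=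
  ∃ y', (y, y') ∈ E

def AEndotactic {d : ℕ} (E : Finset (Edge d)) : Prop :=
  ∀ I : Finset (Fin d), I.Nonempty →
    uEndotactic E (∑ i ∈ I, (Pi.single i 1 : Vec d)) ∧
    uEndotactic E (-∑ i ∈ I, (Pi.single i 1 : Vec d))

/-- Reachability by an undirected path. -/
def WReach {d : ℕ} (E : Finset (Edge d)) : Vec d → Vec d → Prop :=
  Relation.ReflTransGen (fun a b => (a, b) ∈ E ∨ (b, a) ∈ E)

def SCCeq {d : ℕ} (E : Finset (Edge d)) (a b : Vec d) : Prop :=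
  Reach E a b ∧ Reach E b a

noncomputable def vertexFinset {d : ℕ} (E : Finset (Edge d)) : Finset (Vec d) :=
  E.image Prod.fst ∪ E.image Prod.snd

/-- The strongly connected component of `y`, as a finset of vertices. -/
noncomputable def sccClass {d : ℕ} (E : Finset (Edge d)) (y : Vec d) : Finset (Vec d) :=
  (vertexFinset E).filter (fun z => SCCeq E y z)

/-- The number of strongly connected components containing at least two
vertices. -/
noncomputable def numNontrivialSCC {d : ℕ} (E : Finset (Edge d)) : ℕ :=
  (((vertexFinset E).image (sccClass E)).filter (fun C => 2 ≤ C.card)).card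

def stoichSpan (d : ℕ) (E : Finset (Edge d)) : Submodule ℝ (Vec d) :=
  Submodule.span ℝ {v | ∃ e ∈ E, v = e.2 - e.1}

def DeficiencyZero {d : ℕ} (E : Finset (Edge d)) : Prop :=
  (vertexFinset E).card = Module.finrank ℝ (stoichSpan d E) + numNontrivialSCC E

def WeaklyReversible {d : ℕ} (E : Finset (Edge d)) : Prop :=
  ∀ e ∈ E, Reach E e.2 e.1

/-- `G` is strongly endotactic. -/
def StronglyEndotactic {d : ℕ} (E : Finset (Edge d)) : Prop :=
  ∀ u : Vec d, (∃ e ∈ E, (e.2 - e.1) ⬝ᵥ u ≠ 0) →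
    uEndotactic E u ∧ ∃ y ∈ srcU E u, ∀ z, IsSource E z → z ⬝ᵥ u ≤ y ⬝ᵥ u

/-! ### auxiliary -/

namespace Stmt12Aux

lemma dot_ones {d : ℕ} (v : Vec d) (I : Finset (Fin d)) :
    v ⬝ᵥ (∑ i ∈ I, (Pi.single i 1 : Vec d)) = ∑ i ∈ I, v i := by
  induction I using Finset.induction with
  | empty => simp [dotProduct]
  | insert _ _ h ih =>
      rename_i a s
      rw [Finset.sum_insert h, Finset.sum_insert h, ← ih, dotProduct_add,
        dotProduct_single]
      ring

def NatVec {d : ℕ} (y : Vec d) : Prop := ∀ i, ∃ n : ℕ, y i = (n : ℝ)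

lemma natvec_nonneg {d : ℕ} {y : Vec d} (h : NatVec y) (i : Fin d) : 0 ≤ y i := by
  obtain ⟨n, hn⟩ := h i; rw [hn]; positivity

lemma natvec_sum_nonneg {d : ℕ} {y : Vec d} (h : NatVec y) (I : Finset (Fin d)) :
    0 ≤ ∑ i ∈ I, y i :=
  Finset.sum_nonneg fun i _ => natvec_nonneg h i

lemma natvec_sum_nat {d : ℕ} {y : Vec d} (h : NatVec y) (I : Finset (Fin d)) :
    ∃ N : ℕ, ∑ i ∈ I, y i = (N : ℝ) := by
  choose n hn using h
  exact ⟨∑ i ∈ I, n i, by rw [Nat.cast_sum]; exact Finset.sum_congr rfl fun i _ => hn i⟩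

lemma natvec_coord_ge_one {d : ℕ} {y : Vec d} (h : NatVec y) {i : Fin d} (hi : y i ≠ 0) :
    1 ≤ y i := by
  obtain ⟨n, hn⟩ := h i
  rw [hn] at hi ⊢
  exact_mod_cast Nat.one_le_iff_ne_zero.2 (by exact_mod_cast fun hh => hi (by simp [hh]))

lemma natvec_sum_ge_one {d : ℕ} {y : Vec d} (h : NatVec y) (I : Finset (Fin d))
    (hne : ∑ i ∈ I, y i ≠ 0) : 1 ≤ ∑ i ∈ I, y i := by
  obtain ⟨N, hN⟩ := natvec_sum_nat h I
  rw [hN] at hne ⊢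
  exact_mod_cast Nat.one_le_iff_ne_zero.2 (by exact_mod_cast fun hh => hne (by simp [hh]))

lemma natvec_sum_subset {d : ℕ} {y : Vec d} (h : NatVec y) (I : Finset (Fin d)) :
    ∑ i ∈ I, y i ≤ ∑ i, y i :=
  Finset.sum_le_sum_of_subset_of_nonneg (Finset.subset_univ I)
    (fun i _ _ => natvec_nonneg h i)

lemma natvec_coord_le_sum {d : ℕ} {y : Vec d} (h : NatVec y) {I : Finset (Fin d)} {i : Fin d}
    (hi : i ∈ I) : y i ≤ ∑ j ∈ I, y j :=
  Finset.single_le_sum (fun j _ => natvec_nonneg h j) hi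

lemma natvec_eq_zero {d : ℕ} {y : Vec d} (h : NatVec y) (h0 : ∑ i, y i = 0) : y = 0 := by
  funext i
  have := (Finset.sum_eq_zero_iff_of_nonneg (fun j _ => natvec_nonneg h j)).1 h0 i (mem_univ i)
  simpa using this

lemma natvec_eq_single {d : ℕ} {y : Vec d} (h : NatVec y) (h1 : ∑ i, y i = 1) :
    ∃ k, y = Pi.single k 1 := by
  have hex : ∃ k, y k ≠ 0 := by
    by_contra hc
    push_neg at hc
    rw [Finset.sum_eq_zero (fun i _ => hc i)] at h1
    norm_num at h1
  obtain ⟨k, hk⟩ := hex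
  refine ⟨k, funext fun j => ?_⟩
  have hk1 : y k = 1 := by
    have h1' := natvec_coord_ge_one h hk
    have h2' : y k ≤ 1 := h1 ▸ natvec_coord_le_sum h (mem_univ k)
    linarith
  rcases eq_or_ne j k with rfl | hj
  · simpa using hk1
  · have : ∑ i ∈ ({k} : Finset (Fin d)), y i ≤ ∑ i, y i :=
      Finset.sum_le_sum_of_subset_of_nonneg (Finset.subset_univ _) fun i _ _ => natvec_nonneg h i
    have hrest : y j = 0 := by
      by_contra hj0
      have h2 : ∑ i ∈ ({k, j} : Finset (Fin d)), y i ≤ 1 := by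
        rw [← h1]
        exact Finset.sum_le_sum_of_subset_of_nonneg (Finset.subset_univ _)
          fun i _ _ => natvec_nonneg h i
      rw [Finset.sum_insert (by simp [Ne.symm hj]), Finset.sum_singleton] at h2
      have := natvec_coord_ge_one h hj0
      linarith
    simp [Pi.single_apply, hj, hrest]

lemma sum_single_mem {d : ℕ} (k : Fin d) (I : Finset (Fin d)) :
    ∑ i ∈ I, (Pi.single k (1:ℝ) : Vec d) i = if k ∈ I then 1 else 0 := by
  simp [Pi.single_apply, Finset.sum_ite_eq]

lemma natvec_single {d : ℕ} (k : Fin d) : NatVec (Pi.single k (1:ℝ) : Vec d) := by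
  intro i
  rcases eq_or_ne i k with rfl | h
  · exact ⟨1, by simp⟩
  · exact ⟨0, by simp [Pi.single_apply, h]⟩

lemma natvec_zero {d : ℕ} : NatVec (0 : Vec d) := fun i => ⟨0, by simp⟩

end Stmt12Aux

namespace Stmt12Aux

variable {d : ℕ} {E : Finset (Edge d)}

structure Ctx (E : Finset (Edge d)) : Prop where
  simple : ∀ e ∈ E, e.1 ≠ e.2
  nat : ∀ y, InV E y → ∀ i, ∃ n : ℕ, y i = (n : ℝ)
  fo : ∀ y, IsSource E y → ∑ i, y i ≤ 1
  endo : AEndotactic E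

lemma Ctx.natSrc (hc : Ctx E) {y y' : Vec d} (he : (y, y') ∈ E) : NatVec y :=
  hc.nat y ⟨(y, y'), he, Or.inl rfl⟩

lemma Ctx.natTgt (hc : Ctx E) {y y' : Vec d} (he : (y, y') ∈ E) : NatVec y' :=
  hc.nat y' ⟨(y, y'), he, Or.inr rfl⟩

/-- source is zero or a standard basis vector -/
lemma Ctx.src_cases (hc : Ctx E) {y y' : Vec d} (he : (y, y') ∈ E) :
    y = 0 ∨ ∃ k, y = Pi.single k 1 := by
  have hn := hc.natSrc he
  have hle : ∑ i, y i ≤ 1 := hc.fo y ⟨y', he⟩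
  rcases eq_or_ne (∑ i, y i) 0 with h0 | h0
  · exact Or.inl (natvec_eq_zero hn h0)
  · have h1 : (1:ℝ) ≤ ∑ i, y i := natvec_sum_ge_one hn _ h0
    exact Or.inr (natvec_eq_single hn (le_antisymm hle h1))

/-- violation lemma for `u = 𝟙_I` -/
lemma keyPos (hc : Ctx E) {I : Finset (Fin d)} (hI : I.Nonempty) {y y' : Vec d}
    (he : (y, y') ∈ E) (hlt : ∑ i ∈ I, y i < ∑ i ∈ I, y' i)
    (hmax : ∀ z w, (z, w) ∈ E → (∑ i ∈ I, w i) ≠ (∑ i ∈ I, z i) →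
      (∑ i ∈ I, z i) ≤ ∑ i ∈ I, y i) : False := by
  refine (hc.endo I hI).1 ⟨y, y', he, ?_, ?_⟩
  · rw [sub_dotProduct, dot_ones, dot_ones]; linarith
  · rintro z ⟨w, hw, hne⟩
    rw [sub_dotProduct, dot_ones, dot_ones, sub_ne_zero] at hne
    rw [dot_ones, dot_ones]
    exact hmax z w hw hne

/-- violation lemma for `u = -𝟙_I` -/
lemma keyNeg (hc : Ctx E) {I : Finset (Fin d)} (hI : I.Nonempty) {y y' : Vec d}
    (he : (y, y') ∈ E) (hlt : ∑ i ∈ I, y' i < ∑ i ∈ I, y i)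
    (hmax : ∀ z w, (z, w) ∈ E → (∑ i ∈ I, w i) ≠ (∑ i ∈ I, z i) →
      (∑ i ∈ I, y i) ≤ ∑ i ∈ I, z i) : False := by
  refine (hc.endo I hI).2 ⟨y, y', he, ?_, ?_⟩
  · rw [dotProduct_neg, sub_dotProduct, dot_ones, dot_ones]; linarith
  · rintro z ⟨w, hw, hne⟩
    rw [dotProduct_neg, sub_dotProduct, dot_ones, dot_ones, neg_ne_zero,
      sub_ne_zero] at hne
    rw [dotProduct_neg, dotProduct_neg, dot_ones, dot_ones, neg_le_neg_iff]
    exact hmax z w hw hne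

/-- a monomolecular source has target of total mass at most 1 -/
lemma Ctx.tgt_le_one (hc : Ctx E) {y y' : Vec d} (he : (y, y') ∈ E)
    (hy : ∑ i, y i = 1) : ∑ i, y' i ≤ 1 := by
  by_contra hgt
  push_neg at hgt
  have hne : (Finset.univ : Finset (Fin d)).Nonempty := by
    rcases (Finset.univ : Finset (Fin d)).eq_empty_or_nonempty with h | h
    · rw [h] at hy; simp at hy
    · exact h
  refine keyPos hc hne he (by rw [hy]; exact hgt) ?_
  intro z w hzw _
  rw [hy]
  exact hc.fo z ⟨w, hzw⟩

lemma wreach_symm {a b : Vec d} (h : WReach E a b) : WReach E b a :=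
  (@Relation.ReflTransGen.stdSymm _ _ ⟨fun _ _ hr => Or.symm hr⟩).symm _ _ h

lemma wreach_edge_right {a b : Vec d} (he : (a, b) ∈ E) (h : WReach E 0 a) : WReach E 0 b :=
  h.tail (Or.inl he)

lemma wreach_edge_left {a b : Vec d} (he : (a, b) ∈ E) (h : WReach E 0 b) : WReach E 0 a :=
  h.tail (Or.inr he)

/-- membership in G• -/
lemma mem_Gb {e : Edge d} :
    e ∈ E \ E.filter (fun e => WReach E 0 e.1) ↔ e ∈ E ∧ ¬ WReach E 0 e.1 := by
  simp [Finset.mem_sdiff, Finset.mem_filter]; tauto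

lemma mem_G0 {e : Edge d} :
    e ∈ E.filter (fun e => WReach E 0 e.1) ↔ e ∈ E ∧ WReach E 0 e.1 := by
  simp [Finset.mem_filter]

/-- both endpoints of a G• edge avoid the zero component -/
lemma Gb_nZC {y y' : Vec d} (he : (y, y') ∈ E \ E.filter (fun e => WReach E 0 e.1)) :
    ¬ WReach E 0 y ∧ ¬ WReach E 0 y' := by
  obtain ⟨heE, hn⟩ := mem_Gb.1 he
  exact ⟨hn, fun h => hn (wreach_edge_left heE h)⟩

/-- structure of G• edges -/
lemma Gb_mono (hc : Ctx E) {y y' : Vec d}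
    (he : (y, y') ∈ E \ E.filter (fun e => WReach E 0 e.1)) :
    ∃ k l, k ≠ l ∧ y = Pi.single k 1 ∧ y' = Pi.single l 1 := by
  obtain ⟨heE, hn⟩ := mem_Gb.1 he
  have hny' := Gb_nZC he |>.2
  rcases hc.src_cases heE with rfl | ⟨k, rfl⟩
  · exact absurd Relation.ReflTransGen.refl hn
  · have hsum : ∑ i, (Pi.single k 1 : Vec d) i = 1 := by
      simp [sum_single_mem]
    have hle := hc.tgt_le_one heE hsum
    have hnt := hc.natTgt heE
    rcases eq_or_ne (∑ i, y' i) 0 with h0 | h0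
    · rw [natvec_eq_zero hnt h0] at hny'
      exact absurd Relation.ReflTransGen.refl hny'
    · have h1 : ∑ i, y' i = 1 := le_antisymm hle (natvec_sum_ge_one hnt _ h0)
      obtain ⟨l, rfl⟩ := natvec_eq_single hnt h1
      have hkl : k ≠ l := fun h => hc.simple _ heE (by rw [h])
      exact ⟨k, l, hkl, rfl, rfl⟩

end Stmt12Aux
namespace Stmt12Aux

variable {d : ℕ} {E : Finset (Edge d)}

noncomputable def G0F {d : ℕ} (E : Finset (Edge d)) : Finset (Edge d) :=
  E.filter (fun e => WReach E 0 e.1)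

noncomputable def GbF {d : ℕ} (E : Finset (Edge d)) : Finset (Edge d) := E \ G0F E

lemma G0F_def : G0F E = E.filter (fun e => WReach E 0 e.1) := rfl
lemma GbF_def : GbF E = E \ E.filter (fun e => WReach E 0 e.1) := rfl

lemma mem_GbF {e : Edge d} : e ∈ GbF E ↔ e ∈ E ∧ ¬ WReach E 0 e.1 := mem_Gb

lemma mem_G0F {e : Edge d} : e ∈ G0F E ↔ e ∈ E ∧ WReach E 0 e.1 := mem_G0

/-- production of species i forces an i-consuming edge from `single i` -/
lemma prodcons (hc : Ctx E) {z w : Vec d} {i : Fin d} (he : (z, w) ∈ E)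
    (hz : z i = 0) (hw : w i ≠ 0) :
    ∃ w', (Pi.single i 1, w') ∈ E ∧ w' i ≠ 1 := by
  by_contra hcon
  push_neg at hcon
  have hsum : ∀ (v : Vec d) (hv : NatVec v), ∑ j ∈ {i}, v j = v i := fun v _ => by simp
  refine keyPos hc (Finset.singleton_nonempty i) he ?_ ?_
  · rw [hsum z (hc.natSrc he), hsum w (hc.natTgt he), hz]
    have := natvec_coord_ge_one (hc.natTgt he) hw
    linarith
  · intro z' w' hzw' hne
    rw [hsum _ (hc.natSrc hzw'), hsum _ (hc.natTgt hzw'), hsum _ (hc.natSrc he), hz] at *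
    rcases hc.src_cases hzw' with rfl | ⟨k, rfl⟩
    · simp
    · rcases eq_or_ne k i with rfl | hk
      · exact absurd (hcon w' hzw') (by simpa using hne)
      · simp [Pi.single_apply, Ne.symm hk]

/-- consumption of species i forces an i-producing edge from an i-free source -/
lemma consprod (hc : Ctx E) {z w : Vec d} {i : Fin d} (he : (z, w) ∈ E)
    (hlt : w i < z i) :
    ∃ z' w', (z', w') ∈ E ∧ z' i = 0 ∧ w' i ≠ 0 := by
  by_contra hcon
  push_neg at hcon
  have hz1 : z = Pi.single i 1 := by
    rcases hc.src_cases he with rfl | ⟨k, rfl⟩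
    · have := natvec_nonneg (hc.natTgt he) i
      simp only [Pi.zero_apply] at hlt
      linarith
    · rcases eq_or_ne k i with rfl | hk
      · rfl
      · exfalso
        have h0 : (Pi.single k (1:ℝ) : Vec d) i = 0 := by simp [Pi.single_apply, Ne.symm hk]
        rw [h0] at hlt
        have := natvec_nonneg (hc.natTgt he) i
        linarith
  subst hz1
  have hzi : (Pi.single i (1:ℝ) : Vec d) i = 1 := by simp
  refine keyNeg hc (Finset.singleton_nonempty i) he (by simpa using hlt) ?_
  intro z' w' hzw' hne
  simp only [Finset.sum_singleton] at hne ⊢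
  rw [hzi]
  rcases eq_or_ne (z' i) 0 with h0 | h0
  · exact absurd (hcon z' w' hzw' h0) (fun hw' => hne (by rw [hw', h0]))
  · exact natvec_coord_ge_one (hc.natSrc hzw') h0

/-- the reach-set of a vertex inside G• -/
noncomputable def reachSet (E : Finset (Edge d)) (a : Vec d) : Finset (Fin d) :=
  Finset.univ.filter (fun l => Reach (GbF E) a (Pi.single l 1))

lemma mem_reachSet {a : Vec d} {l : Fin d} :
    l ∈ reachSet E a ↔ Reach (GbF E) a (Pi.single l 1) := by
  simp [reachSet]

/-- vertices reachable inside G• from a non-zero-component vertex avoid the zero component -/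
lemma reach_nZC {a b : Vec d} (ha : ¬ WReach E 0 a) (h : Reach (GbF E) a b) :
    ¬ WReach E 0 b := by
  induction h with
  | refl => exact ha
  | tail _ he ih => exact (Gb_nZC (y := _) (y' := _) he).2

/-- out-closure of the reach set -/
lemma reachSet_closed (hc : Ctx E) {a : Vec d} (ha : ¬ WReach E 0 a) {k : Fin d}
    (hk : k ∈ reachSet E a) {w : Vec d} (hw : (Pi.single k 1, w) ∈ E) :
    ∃ l ∈ reachSet E a, w = Pi.single l 1 := by
  have hnk : ¬ WReach E 0 (Pi.single k 1 : Vec d) := reach_nZC ha (mem_reachSet.1 hk)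
  have hGb : (Pi.single k 1, w) ∈ GbF E := mem_GbF.2 ⟨hw, hnk⟩
  obtain ⟨k', l, _, hk', hl⟩ := Gb_mono hc hGb
  have hkk : k' = k := by
    by_contra hne
    have := congrFun hk' k
    simp [Pi.single_apply, hne] at this
  subst hkk
  exact ⟨l, mem_reachSet.2 ((mem_reachSet.1 hk).tail (hl ▸ hGb)), hl⟩

/-- maximality hypothesis for `keyPos` with `I = reachSet E a` -/
lemma reachSet_srcU_zero (hc : Ctx E) {a : Vec d} (ha : ¬ WReach E 0 a) :
    ∀ z w, (z, w) ∈ E → (∑ i ∈ reachSet E a, w i) ≠ (∑ i ∈ reachSet E a, z i) →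
      (∑ i ∈ reachSet E a, z i) ≤ 0 := by
  intro z w hzw hne
  by_contra hpos
  push_neg at hpos
  rcases hc.src_cases hzw with rfl | ⟨k, rfl⟩
  · simp at hpos
  · rw [sum_single_mem] at hpos hne
    by_cases hk : k ∈ reachSet E a
    · obtain ⟨l, hl, rfl⟩ := reachSet_closed hc ha hk hzw
      rw [sum_single_mem, if_pos hl, if_pos hk] at hne
      exact hne rfl
    · rw [if_neg hk] at hpos; linarith

/-- G• is weakly reversible -/
lemma gb_weakly_reversible (hc : Ctx E) : WeaklyReversible (GbF E) := by
  rintro ⟨y, y'⟩ he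
  obtain ⟨k, l, hkl, rfl, rfl⟩ := Gb_mono hc he
  have hny' : ¬ WReach E 0 (Pi.single l 1 : Vec d) := (Gb_nZC he).2
  have hl : l ∈ reachSet E (Pi.single l 1) := mem_reachSet.2 Relation.ReflTransGen.refl
  by_contra hcon
  have hk : k ∉ reachSet E (Pi.single l 1) := fun h => hcon (mem_reachSet.1 h)
  have heE : ((Pi.single k 1 : Vec d), (Pi.single l 1 : Vec d)) ∈ E := (mem_GbF.1 he).1
  refine keyPos hc ⟨l, hl⟩ heE ?_ ?_
  · rw [sum_single_mem, sum_single_mem, if_pos hl, if_neg hk]; norm_num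
  · intro z w hzw hne
    rw [sum_single_mem, if_neg hk]
    exact reachSet_srcU_zero hc hny' z w hzw hne

end Stmt12Aux
namespace Stmt12Aux

variable {d : ℕ} {E : Finset (Edge d)}

lemma single_coord_ne_zero {k i : Fin d} (h : (Pi.single k (1:ℝ) : Vec d) i ≠ 0) : k = i := by
  by_contra hne
  exact h (by simp [Pi.single_apply, Ne.symm hne])

lemma single_sum_one (k : Fin d) : ∑ i, (Pi.single k (1:ℝ) : Vec d) i = 1 := by
  simp [sum_single_mem]

lemma coord_zero_or_one {y : Vec d} (hy : NatVec y) (hle : ∑ i, y i ≤ 1) (i : Fin d) :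
    y i = 0 ∨ y i = 1 := by
  rcases eq_or_ne (y i) 0 with h | h
  · exact Or.inl h
  · have h1 := natvec_coord_ge_one hy h
    have h2 : y i ≤ 1 := le_trans (natvec_coord_le_sum hy (Finset.mem_univ i)) hle
    exact Or.inr (le_antisymm h2 h1)

def Sp0 (E : Finset (Edge d)) (i : Fin d) : Prop :=
  ∃ f ∈ G0F E, f.1 i ≠ 0 ∨ f.2 i ≠ 0

def SpB (E : Finset (Edge d)) (i : Fin d) : Prop :=
  ∃ g ∈ GbF E, g.1 i ≠ 0 ∨ g.2 i ≠ 0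

/-- the zero component and the rest share no species -/
lemma species_disj (hc : Ctx E) (i : Fin d) : ¬ (Sp0 E i ∧ SpB E i) := by
  rintro ⟨⟨f, hf, hfi⟩, ⟨g, hg, hgi⟩⟩
  -- from G•: `single i` is not in the zero component
  obtain ⟨g1, g2⟩ := g
  have hgb : (g1, g2) ∈ E \ E.filter (fun e => WReach E 0 e.1) := by rwa [← GbF_def]
  have hnZ : ¬ WReach E 0 (Pi.single i 1 : Vec d) := by
    obtain ⟨k, l, hkl, hk, hl⟩ := Gb_mono hc hgb
    have := Gb_nZC hgb
    simp only at hgi hk hl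
    rcases hgi with h | h
    · rw [hk] at h; rw [single_coord_ne_zero h] at hk; rw [← hk]; exact this.1
    · rw [hl] at h; rw [single_coord_ne_zero h] at hl; rw [← hl]; exact this.2
  obtain ⟨hfE, hfW⟩ := mem_G0F.1 hf
  -- the source of f cannot contain species i
  have hsrc0 : f.1 i = 0 := by
    by_contra h
    rcases hc.src_cases (y := f.1) (y' := f.2) hfE with h0 | ⟨k, hk⟩
    · rw [h0] at h; simp at h
    · rw [hk] at h
      rw [single_coord_ne_zero h] at hk
      exact hnZ (hk ▸ hfW)
  have hfi2 : f.2 i ≠ 0 := by tauto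
  -- keyPos with the reach set of `single i`
  have hi : i ∈ reachSet E (Pi.single i 1) := mem_reachSet.2 Relation.ReflTransGen.refl
  refine keyPos hc ⟨i, hi⟩ (y := f.1) (y' := f.2) hfE ?_ ?_
  · have h1 : ∑ j ∈ reachSet E (Pi.single i 1), f.1 j = 0 := by
      rcases hc.src_cases (y := f.1) (y' := f.2) hfE with h0 | ⟨k, hk⟩
      · rw [h0]; simp
      · have hkI : k ∉ reachSet E (Pi.single i 1) := by
          intro hkmem
          exact reach_nZC hnZ (mem_reachSet.1 hkmem) (hk ▸ hfW)
        rw [hk, sum_single_mem, if_neg hkI]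
    rw [h1]
    calc (0:ℝ) < f.2 i := lt_of_lt_of_le one_pos (natvec_coord_ge_one (hc.natTgt hfE) hfi2)
    _ ≤ ∑ j ∈ reachSet E (Pi.single i 1), f.2 j :=
        natvec_coord_le_sum (hc.natTgt hfE) hi
  · intro z w hzw hne
    have h1 : ∑ j ∈ reachSet E (Pi.single i 1), f.1 j = 0 := by
      rcases hc.src_cases (y := f.1) (y' := f.2) hfE with h0 | ⟨k, hk⟩
      · rw [h0]; simp
      · have hkI : k ∉ reachSet E (Pi.single i 1) := fun hkmem =>
          reach_nZC hnZ (mem_reachSet.1 hkmem) (hk ▸ hfW)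
        rw [hk, sum_single_mem, if_neg hkI]
    rw [h1]
    exact reachSet_srcU_zero hc hnZ z w hzw hne

/-- any edge touching species i of the zero component is itself in the zero component -/
lemma edge_touch_G0 (hc : Ctx E) {i : Fin d} (hs : Sp0 E i) {f : Edge d} (hf : f ∈ E)
    (hi : f.1 i ≠ 0 ∨ f.2 i ≠ 0) : f ∈ G0F E := by
  by_cases hW : WReach E 0 f.1
  · exact mem_G0F.2 ⟨hf, hW⟩
  · exact absurd ⟨hs, ⟨f, mem_GbF.2 ⟨hf, hW⟩, hi⟩⟩ (species_disj hc i)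

/-- each species of the zero component is consumed -/
lemma sp0_consume (hc : Ctx E) {i : Fin d} (hs : Sp0 E i) :
    ∃ w, ((Pi.single i 1 : Vec d), w) ∈ G0F E ∧ w i = 0 ∧ ∑ j, w j ≤ 1 := by
  have key : ∀ w, ((Pi.single i 1 : Vec d), w) ∈ E → w i ≠ 1 →
      ((Pi.single i 1 : Vec d), w) ∈ G0F E ∧ w i = 0 ∧ ∑ j, w j ≤ 1 := by
    intro w hw hw1
    have hle : ∑ j, w j ≤ 1 := hc.tgt_le_one hw (single_sum_one i)
    have h0 : w i = 0 := (coord_zero_or_one (hc.natTgt hw) hle i).resolve_right hw1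
    exact ⟨edge_touch_G0 hc hs hw (Or.inl (by simp)), h0, hle⟩
  obtain ⟨f, hf, hfi⟩ := hs
  obtain ⟨f1, f2⟩ := f
  simp only at hfi
  have hfE := (mem_G0F.1 hf).1
  by_cases h1 : f1 i ≠ 0
  · rcases hc.src_cases hfE with h0 | ⟨k, hk⟩
    · rw [h0] at h1; simp at h1
    · rw [hk] at h1 hfE
      rw [single_coord_ne_zero h1] at hfE
      have hw1 : f2 i ≠ 1 := by
        intro hw1
        have hle := hc.tgt_le_one hfE (single_sum_one i)
        have hsum : ∑ j, f2 j = 1 := le_antisymm hle (le_trans (le_of_eq hw1.symm)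
          (natvec_coord_le_sum (hc.natTgt hfE) (Finset.mem_univ i)))
        obtain ⟨l, hl⟩ := natvec_eq_single (hc.natTgt hfE) hsum
        rw [hl] at hw1
        have hli : l = i := single_coord_ne_zero (fun hh => by rw [hw1] at hh; norm_num at hh)
        rw [hli] at hl
        exact hc.simple _ hfE (by rw [hl])
      exact ⟨f2, key f2 hfE hw1⟩
  · push_neg at h1
    have h2 : f2 i ≠ 0 := by tauto
    obtain ⟨w', hw', hw1⟩ := prodcons hc hfE h1 h2
    exact ⟨w', key w' hw' hw1⟩

/-- each species of the zero component is produced (within the zero component) -/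
lemma sp0_produce (hc : Ctx E) {i : Fin d} (hs : Sp0 E i) :
    ∃ f ∈ G0F E, f.1 i = 0 ∧ f.2 i ≠ 0 := by
  obtain ⟨f, hf, hfi⟩ := hs
  obtain ⟨f1, f2⟩ := f
  simp only at hfi
  have hfE := (mem_G0F.1 hf).1
  by_cases h1 : f1 i = 0
  · rcases hfi with h | h
    · exact absurd h1 h
    · exact ⟨(f1, f2), hf, h1, h⟩
  · -- source is single i
    rcases hc.src_cases hfE with h0 | ⟨k, hk⟩
    · rw [h0] at h1; simp at h1
    · rw [hk] at h1 hfE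
      have hki : k = i := single_coord_ne_zero (fun hh => h1 hh)
      rw [hki] at hfE
      have h2 : f2 i = 0 := by
        rcases coord_zero_or_one (hc.natTgt hfE) (hc.tgt_le_one hfE (single_sum_one i)) i
          with h | h
        · exact h
        · exfalso
          have hsum : ∑ j, f2 j = 1 := le_antisymm (hc.tgt_le_one hfE (single_sum_one i))
            (le_trans (le_of_eq h.symm) (natvec_coord_le_sum (hc.natTgt hfE) (Finset.mem_univ i)))
          obtain ⟨l, hl⟩ := natvec_eq_single (hc.natTgt hfE) hsum
          rw [hl] at h
          have hli : l = i := single_coord_ne_zero (fun hh => by rw [h] at hh; norm_num at hh)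
          rw [hli] at hl
          exact hc.simple _ hfE (by rw [hl])
      obtain ⟨z', w', hzw', hz', hw'⟩ := consprod hc hfE (by
        rw [h2]; simp)
      exact ⟨(z', w'), edge_touch_G0 hc ⟨(f1, f2), hf, hfi⟩ hzw' (Or.inr hw'), hz', hw'⟩

/-- `0` is a source of the (nonempty) zero component -/
lemma zero_src (hc : Ctx E) (hne : (G0F E).Nonempty) : ∃ w, ((0 : Vec d), w) ∈ G0F E := by
  by_contra h0
  push_neg at h0
  have h0' : ∀ w, ((0 : Vec d), w) ∈ E → False := fun w hw =>
    h0 w (mem_G0F.2 ⟨hw, Relation.ReflTransGen.refl⟩)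
  obtain ⟨f, hf⟩ := hne
  obtain ⟨hfE, hfW⟩ := mem_G0F.1 hf
  rcases Relation.ReflTransGen.cases_head hfW with heq | ⟨c, hstep, _⟩
  · exact h0' f.2 (by rw [heq]; exact hfE)
  rcases hstep with h | h
  · exact h0' c h
  · -- edge (c, 0) ∈ E : apply keyNeg with I = univ
    have hcnat := hc.natSrc h
    have hcsum : ∑ i, c i = 1 := by
      rcases eq_or_ne (∑ i, c i) 0 with hz | hz
      · exact absurd (natvec_eq_zero hcnat hz) (hc.simple _ h)
      · exact le_antisymm (hc.fo c ⟨0, h⟩) (natvec_sum_ge_one hcnat _ hz)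
    have huniv : (Finset.univ : Finset (Fin d)).Nonempty := by
      rcases (Finset.univ : Finset (Fin d)).eq_empty_or_nonempty with hu | hu
      · rw [hu] at hcsum; simp at hcsum
      · exact hu
    refine keyNeg hc huniv h (by rw [hcsum]; simp) ?_
    intro z w hzw hne
    rw [hcsum]
    rcases hc.src_cases hzw with rfl | ⟨k, rfl⟩
    · exact absurd hzw (fun hh => h0' w hh)
    · rw [single_sum_one]

end Stmt12Aux
namespace Stmt12Aux

variable {d : ℕ}

lemma single_inj {k l : Fin d} (h : (Pi.single k 1 : Vec d) = Pi.single l 1) : k = l := by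
  have : (Pi.single l 1 : Vec d) k ≠ 0 := by rw [← h]; simp
  exact (single_coord_ne_zero this).symm

lemma mem_vertexFinset {F : Finset (Edge d)} {y : Vec d} :
    y ∈ vertexFinset F ↔ ∃ e ∈ F, e.1 = y ∨ e.2 = y := by
  simp only [vertexFinset, Finset.mem_union, Finset.mem_image]
  constructor
  · rintro (⟨e, he, rfl⟩ | ⟨e, he, rfl⟩)
    · exact ⟨e, he, Or.inl rfl⟩
    · exact ⟨e, he, Or.inr rfl⟩
  · rintro ⟨e, he, rfl | rfl⟩
    · exact Or.inl ⟨e, he, rfl⟩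
    · exact Or.inr ⟨e, he, rfl⟩

section Generic

variable {F : Finset (Edge d)}

lemma scceq_refl (a : Vec d) : SCCeq F a a :=
  ⟨Relation.ReflTransGen.refl, Relation.ReflTransGen.refl⟩

lemma scceq_symm {a b : Vec d} (h : SCCeq F a b) : SCCeq F b a := ⟨h.2, h.1⟩

lemma scceq_trans {a b c : Vec d} (h : SCCeq F a b) (h' : SCCeq F b c) : SCCeq F a c :=
  ⟨h.1.trans h'.1, h'.2.trans h.2⟩

lemma sccClass_congr {a b : Vec d} (h : SCCeq F a b) : sccClass F a = sccClass F b := by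
  apply Finset.ext
  intro z
  simp only [sccClass, Finset.mem_filter]
  exact ⟨fun ⟨hz, hq⟩ => ⟨hz, scceq_trans (scceq_symm h) hq⟩,
    fun ⟨hz, hq⟩ => ⟨hz, scceq_trans h hq⟩⟩

lemma mem_sccClass_self {y : Vec d} (hy : y ∈ vertexFinset F) : y ∈ sccClass F y :=
  Finset.mem_filter.2 ⟨hy, scceq_refl y⟩

noncomputable def rep (F : Finset (Edge d)) (y : Vec d) : Vec d :=
  if h : (sccClass F y).Nonempty then h.choose else 0

lemma rep_mem {y : Vec d} (hy : y ∈ vertexFinset F) :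
    rep F y ∈ vertexFinset F ∧ SCCeq F y (rep F y) := by
  have hne : (sccClass F y).Nonempty := ⟨y, mem_sccClass_self hy⟩
  have := hne.choose_spec
  unfold sccClass at this
  rw [Finset.mem_filter] at this
  rw [rep, dif_pos hne]
  exact this

lemma rep_congr {a b : Vec d} (h : SCCeq F a b) : rep F a = rep F b := by
  have hcc := sccClass_congr h
  rw [rep, rep, hcc]

lemma rep_idem {y : Vec d} (hy : y ∈ vertexFinset F) : rep F (rep F y) = rep F y :=
  (rep_congr (rep_mem hy).2).symm

lemma reach_sub_mem_stoich {a b : Vec d} (h : Reach F a b) : b - a ∈ stoichSpan d F := by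
  induction h with
  | refl => simp
  | tail _ he ih =>
      rename_i b' c _
      have hgen : c - b' ∈ stoichSpan d F :=
        Submodule.subset_span ⟨(b', c), he, rfl⟩
      have := Submodule.add_mem _ hgen ih
      simpa using this

lemma diff_rep_mem_stoich {y : Vec d} (hy : y ∈ vertexFinset F) :
    y - rep F y ∈ stoichSpan d F := by
  have h := reach_sub_mem_stoich (rep_mem hy).2.1
  have := Submodule.neg_mem _ h
  simpa using this

/-- generic deficiency zero -/
lemma deficiency_generic (F : Finset (Edge d)) (hwr : WeaklyReversible F)
    (hs : ∀ e ∈ F, e.1 ≠ e.2)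
    (hmono : ∀ y ∈ vertexFinset F, ∃ k, y = Pi.single k 1) : DeficiencyZero F := by
  classical
  set Vb := vertexFinset F with hVb
  set R : Finset (Vec d) := Vb.filter (fun y => rep F y = y) with hR
  have hRsub : R ⊆ Vb := Finset.filter_subset _ _
  have hrepR : ∀ y ∈ Vb, rep F y ∈ R := by
    intro y hy
    exact Finset.mem_filter.2 ⟨(rep_mem hy).1, rep_idem hy⟩
  -- edge endpoints are in the same class
  have hedge_scceq : ∀ e ∈ F, SCCeq F e.1 e.2 := fun e he =>
    ⟨Relation.ReflTransGen.single he, hwr e he⟩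
  -- each class has at least two elements
  have hbig : ∀ y ∈ Vb, 2 ≤ (sccClass F y).card := by
    intro y hy
    obtain ⟨e, he, hor⟩ := mem_vertexFinset.1 hy
    have he1 : e.1 ∈ Vb := mem_vertexFinset.2 ⟨e, he, Or.inl rfl⟩
    have he2 : e.2 ∈ Vb := mem_vertexFinset.2 ⟨e, he, Or.inr rfl⟩
    have h1 : e.1 ∈ sccClass F y ∧ e.2 ∈ sccClass F y := by
      rcases hor with h | h
      · subst h
        exact ⟨Finset.mem_filter.2 ⟨he1, scceq_refl _⟩,
          Finset.mem_filter.2 ⟨he2, hedge_scceq e he⟩⟩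
      · subst h
        exact ⟨Finset.mem_filter.2 ⟨he1, scceq_symm (hedge_scceq e he)⟩,
          Finset.mem_filter.2 ⟨he2, scceq_refl _⟩⟩
    have : 1 < (sccClass F y).card :=
      Finset.one_lt_card.2 ⟨e.1, h1.1, e.2, h1.2, hs e he⟩
    omega
  -- number of nontrivial SCCs = number of classes = card R
  have hnum : numNontrivialSCC F = R.card := by
    have h1 : ((Vb.image (sccClass F)).filter (fun C => 2 ≤ C.card)) = Vb.image (sccClass F) := by
      apply Finset.filter_true_of_mem
      intro C hC
      obtain ⟨y, hy, rfl⟩ := Finset.mem_image.1 hC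
      exact hbig y hy
    have h2 : Vb.image (sccClass F) = R.image (sccClass F) := by
      apply Finset.Subset.antisymm
      · intro C hC
        obtain ⟨y, hy, rfl⟩ := Finset.mem_image.1 hC
        exact Finset.mem_image.2 ⟨rep F y, hrepR y hy, (sccClass_congr (rep_mem hy).2).symm⟩
      · exact Finset.image_subset_image hRsub
    have h3 : (R.image (sccClass F)).card = R.card := by
      apply Finset.card_image_of_injOn
      intro a ha b hb hab
      have haV := hRsub ha
      have hbV := hRsub hb
      have : a ∈ sccClass F b := hab ▸ mem_sccClass_self haV
      have hscc : SCCeq F b a := (Finset.mem_filter.1 this).2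
      have := rep_congr hscc
      rw [(Finset.mem_filter.1 ha).2, (Finset.mem_filter.1 hb).2] at this
      exact this.symm
    rw [numNontrivialSCC, h1, h2, h3]
  -- the stoichiometric span
  have hdiff_span : ∀ y ∈ Vb, y - rep F y ∈
      Submodule.span ℝ (((Vb \ R).image (fun y => y - rep F y) : Finset (Vec d)) : Set (Vec d)) := by
    intro y hy
    by_cases hyR : y ∈ R
    · rw [(Finset.mem_filter.1 hyR).2]
      simp
    · exact Submodule.subset_span (by
        exact Finset.mem_coe.2 (Finset.mem_image.2 ⟨y, Finset.mem_sdiff.2 ⟨hy, hyR⟩, rfl⟩))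
  have hspan : stoichSpan d F =
      Submodule.span ℝ (((Vb \ R).image (fun y => y - rep F y) : Finset (Vec d)) : Set (Vec d)) := by
    apply le_antisymm
    · rw [stoichSpan, Submodule.span_le]
      rintro v ⟨e, he, rfl⟩
      have he1 : e.1 ∈ Vb := mem_vertexFinset.2 ⟨e, he, Or.inl rfl⟩
      have he2 : e.2 ∈ Vb := mem_vertexFinset.2 ⟨e, he, Or.inr rfl⟩
      have hrr : rep F e.1 = rep F e.2 := rep_congr (hedge_scceq e he)
      have : e.2 - e.1 = (e.2 - rep F e.2) - (e.1 - rep F e.1) := by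
        rw [hrr]; ring
      rw [SetLike.mem_coe, this]
      exact Submodule.sub_mem _ (hdiff_span _ he2) (hdiff_span _ he1)
    · rw [Submodule.span_le]
      intro v hv
      obtain ⟨y, hy, rfl⟩ := Finset.mem_image.1 (Finset.mem_coe.1 hv)
      exact SetLike.mem_coe.2 (diff_rep_mem_stoich (Finset.mem_sdiff.1 hy).1)
  -- species of non-representative vertices
  set A : Finset (Fin d) := Finset.univ.filter (fun k => (Pi.single k 1 : Vec d) ∈ Vb \ R)
    with hA
  have hVbR : Vb \ R = A.image (fun k => (Pi.single k 1 : Vec d)) := by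
    apply Finset.ext
    intro y
    constructor
    · intro hy
      obtain ⟨k, rfl⟩ := hmono y (Finset.mem_sdiff.1 hy).1
      exact Finset.mem_image.2 ⟨k, Finset.mem_filter.2 ⟨Finset.mem_univ k, hy⟩, rfl⟩
    · intro hy
      obtain ⟨k, hk, rfl⟩ := Finset.mem_image.1 hy
      exact (Finset.mem_filter.1 hk).2
  -- the projection onto A-coordinates
  set π : Vec d →ₗ[ℝ] Vec d :=
    { toFun := fun v k => if k ∈ A then v k else 0
      map_add' := by intro v w; funext k; by_cases h : k ∈ A <;> simp [h]
      map_smul' := by intro c v; funext k; by_cases h : k ∈ A <;> simp [h] } with hπ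
  -- the independent family
  set fam : A → Vec d := fun k => Pi.single (k : Fin d) 1 - rep F (Pi.single (k : Fin d) 1)
    with hfam
  have hπfam : ∀ k : A, π (fam k) = Pi.single (k : Fin d) 1 := by
    intro k
    obtain ⟨k, hk⟩ := k
    have hkA : k ∈ A := hk
    have hkVbR : (Pi.single k 1 : Vec d) ∈ Vb \ R := (Finset.mem_filter.1 hkA).2
    have hkVb : (Pi.single k 1 : Vec d) ∈ Vb := (Finset.mem_sdiff.1 hkVbR).1
    have hkR : (Pi.single k 1 : Vec d) ∉ R := (Finset.mem_sdiff.1 hkVbR).2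
    obtain ⟨b, hb⟩ := hmono _ (rep_mem hkVb).1
    have hrepne : rep F (Pi.single k 1 : Vec d) ≠ Pi.single k 1 := by
      intro h
      exact hkR (Finset.mem_filter.2 ⟨hkVb, h⟩)
    have hbk : b ≠ k := by
      intro h
      exact hrepne (by rw [hb, h])
    have hrepRmem : rep F (Pi.single k 1 : Vec d) ∈ R := hrepR _ hkVb
    funext j
    simp only [hπ, hfam, LinearMap.coe_mk, AddHom.coe_mk]
    by_cases hjA : j ∈ A
    · rcases eq_or_ne j k with rfl | hjk
      · simp [hjA, hb, Pi.single_apply, Ne.symm hbk]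
      · -- j ∈ A, j ≠ k
        have hjVbR : (Pi.single j 1 : Vec d) ∈ Vb \ R := (Finset.mem_filter.1 hjA).2
        have hbj : b ≠ j := by
          intro h
          subst h
          exact (Finset.mem_sdiff.1 hjVbR).2 (hb ▸ hrepRmem)
        simp [hjA, hb, Pi.single_apply, Ne.symm hjk, Ne.symm hbj]
    · have hjk : j ≠ k := by
        intro h
        subst h
        exact hjA (Finset.mem_filter.2 ⟨Finset.mem_univ j, hkVbR⟩)
      simp [hjA, Pi.single_apply, Ne.symm hjk]
  have hindep : LinearIndependent ℝ fam := by
    have hbase : LinearIndependent ℝ (fun k : A => (Pi.single (k : Fin d) 1 : Vec d)) := by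
      have h1 := (Pi.basisFun ℝ (Fin d)).linearIndependent
      have h2 := h1.comp (fun k : A => (k : Fin d)) Subtype.val_injective
      convert h2 using 1
      funext k
      simp [Pi.basisFun_apply]
    apply LinearIndependent.of_comp π
    have : (π ∘ fam) = fun k : A => (Pi.single (k : Fin d) 1 : Vec d) := funext hπfam
    rw [this]
    exact hbase
  have hrange : Set.range fam =
      (((Vb \ R).image (fun y => y - rep F y) : Finset (Vec d)) : Set (Vec d)) := by
    apply Set.ext
    intro v
    constructor
    · rintro ⟨⟨k, hk⟩, rfl⟩
      exact Finset.mem_coe.2 (Finset.mem_image.2 ⟨Pi.single k 1,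
        (Finset.mem_filter.1 hk).2, rfl⟩)
    · intro hv
      obtain ⟨y, hy, rfl⟩ := Finset.mem_image.1 (Finset.mem_coe.1 hv)
      obtain ⟨k, rfl⟩ := hmono y (Finset.mem_sdiff.1 hy).1
      exact ⟨⟨k, Finset.mem_filter.2 ⟨Finset.mem_univ k, hy⟩⟩, rfl⟩
  have hfinrank : Module.finrank ℝ (stoichSpan d F) = A.card := by
    rw [hspan, ← hrange, finrank_span_eq_card hindep, Fintype.card_coe]
  have hcardA : A.card = (Vb \ R).card := by
    rw [hVbR]
    rw [Finset.card_image_of_injOn (fun a _ b _ h => single_inj h)]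
  rw [DeficiencyZero, hfinrank, hnum, hcardA, Finset.card_sdiff_of_subset hRsub, ← hVb]
  have : R.card ≤ Vb.card := Finset.card_le_card hRsub
  omega

end Generic

end Stmt12Aux
namespace Stmt12Aux

variable {d : ℕ} {E : Finset (Edge d)}

lemma single_dot (k : Fin d) (u : Vec d) : (Pi.single k 1 : Vec d) ⬝ᵥ u = u k := by
  rw [single_dotProduct, one_mul]

lemma dot_nonpos {u w : Vec d} (hw : NatVec w) (hsupp : ∀ i, w i ≠ 0 → u i ≤ 0) :
    w ⬝ᵥ u ≤ 0 := by
  apply Finset.sum_nonpos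
  intro i _
  by_cases h : w i = 0
  · rw [h]; simp
  · exact mul_nonpos_of_nonneg_of_nonpos (natvec_nonneg hw i) (hsupp i h)

lemma dot_coord_zero {u w : Vec d} (hw : NatVec w) (hsupp : ∀ i, w i ≠ 0 → u i ≤ 0)
    (h0 : w ⬝ᵥ u = 0) {i : Fin d} (hi : u i < 0) : w i = 0 := by
  have hterms : ∀ j ∈ Finset.univ, w j * u j ≤ 0 := by
    intro j _
    by_cases h : w j = 0
    · rw [h]; simp
    · exact mul_nonpos_of_nonneg_of_nonpos (natvec_nonneg hw j) (hsupp j h)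
  have := (Finset.sum_eq_zero_iff_of_nonpos hterms).1 h0 i (Finset.mem_univ i)
  rcases mul_eq_zero.1 this with h | h
  · exact h
  · exact absurd h (ne_of_lt hi)

lemma dot_zero_of_supp {u w : Vec d} (hsupp : ∀ i, w i ≠ 0 → u i = 0) : w ⬝ᵥ u = 0 := by
  apply Finset.sum_eq_zero
  intro i _
  by_cases h : w i = 0
  · rw [h]; simp
  · rw [hsupp i h]; simp

lemma zero_edge_G0 {w : Vec d} (h : ((0 : Vec d), w) ∈ E) : ((0 : Vec d), w) ∈ G0F E :=
  mem_G0F.2 ⟨h, Relation.ReflTransGen.refl⟩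

/-- a part of species closed under adjacency cannot meet the zero component -/
lemma closed_part_contra (T : Finset (Fin d))
    (hout : ∀ k ∈ T, ∀ w : Vec d, (Pi.single k 1, w) ∈ E → ∃ l ∈ T, w = Pi.single l 1)
    (hin : ∀ z w : Vec d, (z, w) ∈ E → (∑ i ∈ T, w i) ≠ 0 → ∃ k ∈ T, z = Pi.single k 1)
    {k0 : Fin d} (hk0 : k0 ∈ T) (hW : WReach E 0 (Pi.single k0 1)) : False := by
  have hsym : WReach E (Pi.single k0 1) 0 := wreach_symm hW
  have hP : ∀ v : Vec d, WReach E (Pi.single k0 1) v → ∃ k ∈ T, v = Pi.single k 1 := by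
    intro v hv
    induction hv with
    | refl => exact ⟨k0, hk0, rfl⟩
    | tail _ hstep ih =>
        rename_i b c _
        obtain ⟨k, hk, rfl⟩ := ih
        rcases hstep with h | h
        · exact hout k hk c h
        · refine hin c _ h ?_
          rw [sum_single_mem, if_pos hk]
          norm_num
  obtain ⟨k, _, h0⟩ := hP 0 hsym
  have := congrFun h0 k
  simp at this

end Stmt12Aux
namespace Stmt12Aux

variable {d : ℕ} {E : Finset (Edge d)}

lemma src_val_cases (hc : Ctx E) {y y' : Vec d} (he : (y, y') ∈ G0F E) :
    y = 0 ∨ ∃ k, Sp0 E k ∧ y = Pi.single k 1 := by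
  rcases hc.src_cases (mem_G0F.1 he).1 with h | ⟨k, hk⟩
  · exact Or.inl h
  · exact Or.inr ⟨k, ⟨(y, y'), he, Or.inl (by rw [hk]; simp)⟩, hk⟩

lemma tgt_supp (he : (y', y) ∈ G0F E) {i : Fin d} (hi : (y : Vec d) i ≠ 0) : Sp0 E i :=
  ⟨(y', y), he, Or.inr hi⟩

lemma g0_strongly_endotactic (hc : Ctx E) : StronglyEndotactic (G0F E) := by
  intro u hex
  suffices hkey : ∃ ys ∈ srcU (G0F E) u, (∀ z, IsSource (G0F E) z → z ⬝ᵥ u ≤ ys ⬝ᵥ u) ∧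
      (∀ y y', (y, y') ∈ G0F E → y ⬝ᵥ u = ys ⬝ᵥ u → y' ⬝ᵥ u ≤ y ⬝ᵥ u) by
    obtain ⟨ys, hys, hmax, htgt⟩ := hkey
    refine ⟨?_, ys, hys, hmax⟩
    rintro ⟨y, y', hyG, hpos, hviol⟩
    have h1 : y ⬝ᵥ u ≤ ys ⬝ᵥ u := hmax y ⟨y', hyG⟩
    have h2 : ys ⬝ᵥ u ≤ y ⬝ᵥ u := hviol ys hys
    have h3 := htgt y y' hyG (le_antisymm h1 h2)
    rw [sub_dotProduct] at hpos
    linarith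
  by_cases hpos : ∃ i, Sp0 E i ∧ 0 < u i
  · -- Case A : some positive species
    obtain ⟨i0, hi0, hi0pos⟩ := hpos
    have hS0ne : (Finset.univ.filter (fun i => Sp0 E i)).Nonempty :=
      ⟨i0, Finset.mem_filter.2 ⟨Finset.mem_univ _, hi0⟩⟩
    obtain ⟨imax, himax, hub'⟩ := Finset.exists_max_image _ u hS0ne
    have hSpimax : Sp0 E imax := (Finset.mem_filter.1 himax).2
    set m := u imax with hm
    have hub : ∀ j, Sp0 E j → u j ≤ m := fun j hj =>
      hub' j (Finset.mem_filter.2 ⟨Finset.mem_univ _, hj⟩)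
    have hm0 : 0 < m := lt_of_lt_of_le hi0pos (hub i0 hi0)
    -- (b') : a maximal source in srcU
    have hsrc : ∃ i, Sp0 E i ∧ u i = m ∧ (Pi.single i 1 : Vec d) ∈ srcU (G0F E) u := by
      by_contra hcon
      push_neg at hcon
      have hcon' : ∀ i, Sp0 E i → u i = m → ∀ w, ((Pi.single i 1 : Vec d), w) ∈ G0F E →
          w ⬝ᵥ u = m := by
        intro i hi him w hw
        by_contra hne
        exact (hcon i hi him) ⟨w, hw, by
          rw [sub_dotProduct, single_dot, him]
          exact sub_ne_zero.2 hne⟩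
      set T : Finset (Fin d) := Finset.univ.filter (fun i => Sp0 E i ∧ u i = m) with hT
      have hTmem : ∀ {i}, i ∈ T ↔ Sp0 E i ∧ u i = m := fun {i} => by
        simp [hT]
      have himaxT : imax ∈ T := hTmem.2 ⟨hSpimax, rfl⟩
      have hout : ∀ k ∈ T, ∀ w : Vec d, (Pi.single k 1, w) ∈ E → ∃ l ∈ T, w = Pi.single l 1 := by
        intro k hk w hw
        obtain ⟨hSpk, hukm⟩ := hTmem.1 hk
        have hwG : ((Pi.single k 1 : Vec d), w) ∈ G0F E :=
          edge_touch_G0 hc hSpk hw (Or.inl (by simp))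
        have hwu : w ⬝ᵥ u = m := hcon' k hSpk hukm w hwG
        have hwnat := hc.natTgt hw
        have hwne : ∑ j, w j ≠ 0 := by
          intro h0
          rw [natvec_eq_zero hwnat h0] at hwu
          rw [zero_dotProduct] at hwu
          linarith
        have hsum : ∑ j, w j = 1 := le_antisymm (hc.tgt_le_one hw (single_sum_one k))
          (natvec_sum_ge_one hwnat _ hwne)
        obtain ⟨l, rfl⟩ := natvec_eq_single hwnat hsum
        have hul : u l = m := by rw [← single_dot l u, hwu]
        exact ⟨l, hTmem.2 ⟨tgt_supp hwG (by simp), hul⟩, rfl⟩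
      have hin : ∀ z w : Vec d, (z, w) ∈ E → (∑ i ∈ T, w i) ≠ 0 → ∃ k ∈ T, z = Pi.single k 1 := by
        intro z w hzw hTw
        by_contra hno
        push_neg at hno
        have hz0 : ∑ i ∈ T, z i = 0 := by
          rcases hc.src_cases hzw with rfl | ⟨k, rfl⟩
          · simp
          · rcases Finset.decidableMem k T |>.em with hkT | hkT
            · exact absurd rfl (hno k hkT)
            · rw [sum_single_mem, if_neg hkT]
        refine keyPos hc ⟨imax, himaxT⟩ hzw ?_ ?_
        · rw [hz0]
          exact lt_of_lt_of_le one_pos (natvec_sum_ge_one (hc.natTgt hzw) _ hTw)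
        · intro z' w' hzw' hne'
          rw [hz0]
          rcases hc.src_cases hzw' with rfl | ⟨k', rfl⟩
          · simp
          · by_cases hk'T : k' ∈ T
            · obtain ⟨l', hl', rfl⟩ := hout k' hk'T w' hzw'
              rw [sum_single_mem, sum_single_mem, if_pos hl', if_pos hk'T] at hne'
              exact absurd rfl hne'
            · rw [sum_single_mem, if_neg hk'T]
        
      obtain ⟨w0, hw0, _, _⟩ := sp0_consume hc hSpimax
      exact closed_part_contra T hout hin himaxT (mem_G0F.1 hw0).2
    obtain ⟨i, hSpi, hui, hsrci⟩ := hsrc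
    refine ⟨Pi.single i 1, hsrci, ?_, ?_⟩
    · intro z hz
      obtain ⟨y', hzy'⟩ := hz
      rw [single_dot, hui]
      rcases src_val_cases hc hzy' with rfl | ⟨k, hSpk, rfl⟩
      · rw [zero_dotProduct]; linarith
      · rw [single_dot]; exact hub k hSpk
    · intro y y' hyG hyval
      rw [single_dot, hui] at hyval
      rcases src_val_cases hc hyG with rfl | ⟨k, hSpk, rfl⟩
      · rw [zero_dotProduct] at hyval; linarith
      · have hyE := (mem_G0F.1 hyG).1
        have hynat := hc.natTgt hyE
        have hsum : ∑ j, y' j ≤ 1 := hc.tgt_le_one hyE (single_sum_one k)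
        rw [hyval]
        rcases eq_or_ne (∑ j, y' j) 0 with h0 | h0
        · rw [natvec_eq_zero hynat h0, zero_dotProduct]; linarith
        · obtain ⟨l, rfl⟩ := natvec_eq_single hynat
            (le_antisymm hsum (natvec_sum_ge_one hynat _ h0))
          rw [single_dot]
          exact hub l (tgt_supp hyG (by simp))
  · -- Case B : all species nonpositive
    push_neg at hpos
    have hneg : ∀ i, Sp0 E i → u i ≤ 0 := hpos
    have htgt0 : ∀ y y', (y, y') ∈ G0F E → y' ⬝ᵥ u ≤ 0 := by
      intro y y' h
      exact dot_nonpos (hc.natTgt (mem_G0F.1 h).1) (fun i hi => hneg i (tgt_supp h hi))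
    have hsrc : ∃ ys ∈ srcU (G0F E) u, ys ⬝ᵥ u = 0 := by
      by_contra hcon
      push_neg at hcon
      have H0 : ∀ w, ((0 : Vec d), w) ∈ E → w ⬝ᵥ u = 0 := by
        intro w hw
        by_contra hne
        exact hcon 0 ⟨w, zero_edge_G0 hw, by
          rw [sub_dotProduct, zero_dotProduct, sub_zero]; exact hne⟩
          (zero_dotProduct u)
      have Hj : ∀ j, Sp0 E j → u j = 0 → ∀ w, ((Pi.single j 1 : Vec d), w) ∈ E →
          w ⬝ᵥ u = 0 := by
        intro j hSpj huj w hw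
        by_contra hne
        refine hcon (Pi.single j 1) ⟨w, edge_touch_G0 hc hSpj hw (Or.inl (by simp)), ?_⟩
          (by rw [single_dot, huj])
        rw [sub_dotProduct, single_dot, huj, sub_zero]
        exact hne
      set N : Finset (Fin d) := Finset.univ.filter (fun i => Sp0 E i ∧ u i < 0) with hN
      have hNmem : ∀ {i}, i ∈ N ↔ Sp0 E i ∧ u i < 0 := fun {i} => by simp [hN]
      have hNne : N.Nonempty := by
        by_contra hNe
        push_neg at hNe
        have hz : ∀ i, Sp0 E i → u i = 0 := by
          intro i hi
          rcases lt_or_eq_of_le (hneg i hi) with h | h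
          · exact absurd (hNmem.2 ⟨hi, h⟩) (by rw [hNe]; simp)
          · exact h
        obtain ⟨e0, he0, hne0⟩ := hex
        obtain ⟨e1, e2⟩ := e0
        have h1 : e1 ⬝ᵥ u = 0 := by
          rcases src_val_cases hc he0 with rfl | ⟨k, hSpk, rfl⟩
          · exact zero_dotProduct u
          · rw [single_dot]; exact hz k hSpk
        have h2 : e2 ⬝ᵥ u = 0 :=
          dot_zero_of_supp (fun i hi => hz i (tgt_supp he0 hi))
        rw [sub_dotProduct] at hne0
        simp only at hne0
        rw [h1, h2] at hne0
        simp at hne0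
      -- targets with zero value have no N-species
      have hsuppN : ∀ y y', (y, y') ∈ G0F E → y' ⬝ᵥ u = 0 → ∑ i ∈ N, y' i = 0 := by
        intro y y' h h0
        apply Finset.sum_eq_zero
        intro i hi
        obtain ⟨hSpi, hui⟩ := hNmem.1 hi
        exact dot_coord_zero (hc.natTgt (mem_G0F.1 h).1)
          (fun j hj => hneg j (tgt_supp h hj)) h0 hui
      have hout : ∀ k ∈ N, ∀ w : Vec d, (Pi.single k 1, w) ∈ E → ∃ l ∈ N, w = Pi.single l 1 := by
        intro k hk w hw
        obtain ⟨hSpk, hukneg⟩ := hNmem.1 hk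
        have hwG : ((Pi.single k 1 : Vec d), w) ∈ G0F E :=
          edge_touch_G0 hc hSpk hw (Or.inl (by simp))
        have hNw : ∑ i ∈ N, w i ≠ 0 := by
          intro hzero
          refine keyNeg hc hNne hw ?_ ?_
          · rw [hzero, sum_single_mem, if_pos hk]; norm_num
          · intro z' w' hzw' hne'
            rw [sum_single_mem, if_pos hk]
            rcases hc.src_cases hzw' with rfl | ⟨j, rfl⟩
            · exfalso
              have hwu' : w' ⬝ᵥ u = 0 := H0 w' hzw'
              have := hsuppN _ _ (zero_edge_G0 hzw') hwu'
              rw [this] at hne'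
              simp at hne'
            · by_cases hjN : j ∈ N
              · rw [sum_single_mem, if_pos hjN]
              · exfalso
                rw [sum_single_mem, if_neg hjN] at hne'
                by_cases hSpj : Sp0 E j
                · have huj : u j = 0 := by
                    rcases lt_or_eq_of_le (hneg j hSpj) with h | h
                    · exact absurd (hNmem.2 ⟨hSpj, h⟩) hjN
                    · exact h
                  have hwu' : w' ⬝ᵥ u = 0 := Hj j hSpj huj w' hzw'
                  have := hsuppN _ _ (edge_touch_G0 hc hSpj hzw' (Or.inl (by simp))) hwu'
                  rw [this] at hne'
                  exact hne' rfl
                · -- edge from a non-G0 species : must be in G•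
                  have hGb : ((Pi.single j 1 : Vec d), w') ∈ E \ E.filter
                      (fun e => WReach E 0 e.1) := by
                    rw [← GbF_def]
                    refine mem_GbF.2 ⟨hzw', fun hWj => ?_⟩
                    exact hSpj ⟨_, mem_G0F.2 ⟨hzw', hWj⟩, Or.inl (by simp)⟩
                  obtain ⟨k', l', _, _, hl'⟩ := Gb_mono hc hGb
                  have hSpBl' : SpB E l' := ⟨_, by rw [← GbF_def] at hGb; exact hGb,
                    Or.inr (by rw [hl']; simp)⟩
                  have hl'N : l' ∉ N := by
                    intro hmem
                    exact species_disj hc l' ⟨(hNmem.1 hmem).1, hSpBl'⟩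
                  rw [hl', sum_single_mem, if_neg hl'N] at hne'
                  exact hne' rfl
        have hwnat := hc.natTgt hw
        have hge1 : (1:ℝ) ≤ ∑ i ∈ N, w i := natvec_sum_ge_one hwnat _ hNw
        have hsum : ∑ j, w j = 1 := le_antisymm (hc.tgt_le_one hw (single_sum_one k))
          (le_trans hge1 (natvec_sum_subset hwnat N))
        obtain ⟨l, rfl⟩ := natvec_eq_single hwnat hsum
        have hlN : l ∈ N := by
          by_contra hlN
          rw [sum_single_mem, if_neg hlN] at hNw
          exact hNw rfl
        exact ⟨l, hlN, rfl⟩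
      have hin : ∀ z w : Vec d, (z, w) ∈ E → (∑ i ∈ N, w i) ≠ 0 →
          ∃ k ∈ N, z = Pi.single k 1 := by
        intro z w hzw hNw
        by_contra hno
        push_neg at hno
        have hz0 : ∑ i ∈ N, z i = 0 := by
          rcases hc.src_cases hzw with rfl | ⟨k, rfl⟩
          · simp
          · by_cases hkN : k ∈ N
            · exact absurd rfl (hno k hkN)
            · rw [sum_single_mem, if_neg hkN]
        refine keyPos hc hNne hzw ?_ ?_
        · rw [hz0]
          exact lt_of_lt_of_le one_pos (natvec_sum_ge_one (hc.natTgt hzw) _ hNw)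
        · intro z' w' hzw' hne'
          rw [hz0]
          rcases hc.src_cases hzw' with rfl | ⟨k', rfl⟩
          · simp
          · by_cases hk'N : k' ∈ N
            · obtain ⟨l', hl', rfl⟩ := hout k' hk'N w' hzw'
              rw [sum_single_mem, sum_single_mem, if_pos hl', if_pos hk'N] at hne'
              exact absurd rfl hne'
            · rw [sum_single_mem, if_neg hk'N]
      obtain ⟨k0, hk0⟩ := hNne
      obtain ⟨w0, hw0, _, _⟩ := sp0_consume hc (hNmem.1 hk0).1
      exact closed_part_contra N hout hin hk0 (mem_G0F.1 hw0).2
    obtain ⟨ys, hys, hys0⟩ := hsrc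
    refine ⟨ys, hys, ?_, ?_⟩
    · intro z hz
      obtain ⟨y', hzy'⟩ := hz
      rw [hys0]
      rcases src_val_cases hc hzy' with rfl | ⟨k, hSpk, rfl⟩
      · rw [zero_dotProduct]
      · rw [single_dot]; exact hneg k hSpk
    · intro y y' hyG hyval
      rw [hys0] at hyval
      rw [hyval]
      exact htgt0 y y' hyG

end Stmt12Aux

namespace Stmt12Aux

variable {d : ℕ} {E : Finset (Edge d)}

lemma Gb_mono' (hc : Ctx E) {e : Edge d} (he : e ∈ GbF E) :
    ∃ k l, k ≠ l ∧ e.1 = Pi.single k 1 ∧ e.2 = Pi.single l 1 := by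
  obtain ⟨y, y'⟩ := e
  obtain ⟨k, l, hkl, h1, h2⟩ := Gb_mono hc (by rw [← GbF_def]; exact he)
  exact ⟨k, l, hkl, h1, h2⟩

lemma descend {u : Vec d} {a b : Vec d} (h : Reach (GbF E) a b) {c : ℝ}
    (ha : c < a ⬝ᵥ u) (hb : b ⬝ᵥ u ≤ c) :
    ∃ z, z ∈ srcU E u ∧ c < z ⬝ᵥ u := by
  induction h using Relation.ReflTransGen.head_induction_on with
  | refl => linarith
  | head hstep _ ih =>
      rename_i a' x _
      by_cases hx : x ⬝ᵥ u ≤ c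
      · refine ⟨a', ⟨x, (mem_GbF.1 hstep).1, ?_⟩, ha⟩
        rw [sub_dotProduct]
        intro hzero
        have : x ⬝ᵥ u = a' ⬝ᵥ u := by linarith [sub_eq_zero.1 hzero]
        linarith
      · push_neg at hx
        exact ih hx
  
lemma endotactic_of_ctx (hc : Ctx E) : Endotactic E := by
  intro u
  rintro ⟨y, y', he, hpos, hmax⟩
  by_cases hW : WReach E 0 y
  · have hyG : (y, y') ∈ G0F E := mem_G0F.2 ⟨he, hW⟩
    have hSE := g0_strongly_endotactic hc u ⟨(y, y'), hyG, ne_of_gt hpos⟩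
    exact hSE.1 ⟨y, y', hyG, hpos, fun z hz =>
      hmax z (by obtain ⟨w, hw, hne⟩ := hz; exact ⟨w, (mem_G0F.1 hw).1, hne⟩)⟩
  · have hyGb : (y, y') ∈ GbF E := mem_GbF.2 ⟨he, hW⟩
    have hreach : Reach (GbF E) y' y := gb_weakly_reversible hc (y, y') hyGb
    have hstep : y ⬝ᵥ u < y' ⬝ᵥ u := by
      rw [sub_dotProduct] at hpos
      linarith
    obtain ⟨z, hz, hzgt⟩ := descend hreach hstep le_rfl
    linarith [hmax z hz]

end Stmt12Aux


open Stmt12Aux in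
/-- Structure theorem: for an `𝒜`-endotactic first order reaction graph `G`,
the component `G⁰` of the zero complex and the rest `G•` have disjoint sets of
species; `G•` is weakly reversible, monomolecular and of deficiency zero;
`G⁰`, if nonempty, is strongly endotactic; consequently `G` is endotactic. -/
theorem stmt12 {d : ℕ} (E : Finset (Edge d))
    (hsimple : ∀ e ∈ E, e.1 ≠ e.2)
    (hnat : ∀ y, InV E y → ∀ i, ∃ n : ℕ, y i = (n : ℝ))
    (hfo : ∀ y, IsSource E y → ∑ i, y i ≤ 1)
    (hnored : ∀ i : Fin d, ∃ e ∈ E, e.2 i ≠ e.1 i)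
    (hA : AEndotactic E) :
    (∀ i : Fin d,
      ¬ ((∃ e ∈ E.filter (fun e => WReach E 0 e.1), e.1 i ≠ 0 ∨ e.2 i ≠ 0) ∧
         (∃ e ∈ E \ E.filter (fun e => WReach E 0 e.1), e.1 i ≠ 0 ∨ e.2 i ≠ 0))) ∧
    WeaklyReversible (E \ E.filter (fun e => WReach E 0 e.1)) ∧
    (∀ e ∈ E \ E.filter (fun e => WReach E 0 e.1),
      ∑ i, e.1 i = 1 ∧ ∑ i, e.2 i = 1) ∧
    DeficiencyZero (E \ E.filter (fun e => WReach E 0 e.1)) ∧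
    ((E.filter (fun e => WReach E 0 e.1)).Nonempty →
      StronglyEndotactic (E.filter (fun e => WReach E 0 e.1))) ∧
    Endotactic E := by
  have hc : Ctx E := ⟨hsimple, hnat, hfo, hA⟩
  rw [show E \ E.filter (fun e => WReach E 0 e.1) = GbF E from rfl,
    show E.filter (fun e => WReach E 0 e.1) = G0F E from rfl]
  refine ⟨?_, gb_weakly_reversible hc, ?_, ?_, fun _ => g0_strongly_endotactic hc,
    endotactic_of_ctx hc⟩
  · exact fun i h => species_disj hc i h
  · intro e he
    obtain ⟨k, l, _, h1, h2⟩ := Gb_mono' hc he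
    rw [h1, h2, single_sum_one, single_sum_one]
    exact ⟨rfl, rfl⟩
  · exact deficiency_generic (GbF E) (gb_weakly_reversible hc)
      (fun e he => hc.simple e (mem_GbF.1 he).1)
      (fun y hy => by
        obtain ⟨e, he, hor⟩ := mem_vertexFinset.1 hy
        obtain ⟨k, l, _, h1, h2⟩ := Gb_mono' hc he
        rcases hor with rfl | rfl
        · exact ⟨k, h1.symm ▸ rfl⟩
        · exact ⟨l, h2.symm ▸ rfl⟩)
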